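/- Suppose the residence-time matrix P is irreducible and R0 > 1. Then the disease-free equilibrium I = 0 of I'(t) = G(I(t)) is unstable: there is a neighborhood U of 0 such that for every δ > 0 there exists an initial condition I(0) ∈ Ω with 0 < |I(0)| < δ whose solution leaves U in finite time. -/

import Mathlib

open Matrix Filter

noncomputable section

/-- The spectral radius of a real square matrix: the supremum of the norms of its
complex eigenvalues. -/
def specRad {n : ℕ} (A : Matrix (Fin n) (Fin n) ℝ) : ℝ :=
  sSup {r : ℝ | ∃ μ ∈ spectrum ℂ (A.map (Complex.ofReal)), ‖μ‖ = r}

/-- Irreducibility of a square matrix: no proper nonempty subset of indices is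
invariant, i.e. from every such subset there is a nonzero entry leading outside of it. -/
def MatIrred {n : ℕ} (A : Matrix (Fin n) (Fin n) ℝ) : Prop :=
  ∀ S : Set (Fin n), S.Nonempty → S ≠ Set.univ → ∃ i ∈ S, ∃ j ∈ Sᶜ, A i j ≠ 0

/-- N̄ᵢ = bᵢ/dᵢ, the asymptotic population of patch i. -/
def Nbar {n : ℕ} (b d : Fin n → ℝ) : Fin n → ℝ := fun i => b i / d i

/-- Ñⱼ = ∑ₖ p_{kj} N̄ₖ, the effective population of patch j. -/
def Ntil {n : ℕ} (P : Matrix (Fin n) (Fin n) ℝ) (b d : Fin n → ℝ) : Fin n → ℝ :=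
  fun j => ∑ k, P k j * Nbar b d k

/-- M = P·diag(β)·diag(Ñ)⁻¹·Pᵀ. -/
def Mmat {n : ℕ} (P : Matrix (Fin n) (Fin n) ℝ) (β b d : Fin n → ℝ) :
    Matrix (Fin n) (Fin n) ℝ :=
  P * Matrix.diagonal β * Matrix.diagonal (fun j => (Ntil P b d j)⁻¹) * Pᵀ

/-- F = diag(N̄)·M. -/
def Fmat {n : ℕ} (P : Matrix (Fin n) (Fin n) ℝ) (β b d : Fin n → ℝ) :
    Matrix (Fin n) (Fin n) ℝ :=
  Matrix.diagonal (Nbar b d) * Mmat P β b d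

/-- V = −diag(dᵢ + γᵢ). -/
def Vmat {n : ℕ} (d γ : Fin n → ℝ) : Matrix (Fin n) (Fin n) ℝ :=
  -Matrix.diagonal (fun i => d i + γ i)

/-- The SIS vector field G(I) = diag(N̄ − I)·M·I + V·I, written componentwise. -/
def Gfield {n : ℕ} (P : Matrix (Fin n) (Fin n) ℝ) (β b d γ : Fin n → ℝ)
    (I : Fin n → ℝ) : Fin n → ℝ :=
  fun i => (Nbar b d i - I i) * (Mmat P β b d).mulVec I i - (d i + γ i) * I i

/-- Ω = {I : 0 ≤ Iᵢ ≤ N̄ᵢ for all i}. -/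
def OmegaSet {n : ℕ} (b d : Fin n → ℝ) : Set (Fin n → ℝ) :=
  {I | ∀ i, 0 ≤ I i ∧ I i ≤ Nbar b d i}

/-- The basic reproduction number R₀ = ρ(−F·V⁻¹). -/
def R0 {n : ℕ} (P : Matrix (Fin n) (Fin n) ℝ) (β b d γ : Fin n → ℝ) : ℝ :=
  specRad (-(Fmat P β b d * (Vmat d γ)⁻¹))

/-- `I : ℝ → ℝⁿ` is a solution of the SIS system on [0,∞). -/
def IsSol {n : ℕ} (P : Matrix (Fin n) (Fin n) ℝ) (β b d γ : Fin n → ℝ)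
    (I : ℝ → Fin n → ℝ) : Prop :=
  ∀ t ∈ Set.Ici (0 : ℝ), HasDerivWithinAt I (Gfield P β b d γ (I t)) (Set.Ici 0) t

/-- if P is irreducible and R₀ > 1 then the DFE is unstable: there is a
neighborhood U of 0 such that for every δ > 0 some initial condition in Ω of norm
less than δ (and positive) has its solution leave U in finite time. -/
lemma aux_mul_lb {a A t B : ℝ} (ha : 0 ≤ a) (haA : a ≤ A) (hBt : B ≤ t) (hB : B ≤ 0) :
    A * B ≤ a * t := by
  rcases le_or_gt 0 t with ht | ht
  · calc A * B ≤ 0 := mul_nonpos_of_nonneg_of_nonpos (ha.trans haA) hB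
    _ ≤ a * t := mul_nonneg ha ht
  · calc A * B ≤ A * t := mul_le_mul_of_nonneg_left hBt (ha.trans haA)
    _ ≤ a * t := mul_le_mul_of_nonpos_right haA ht.le

lemma frequently_slope_lt {f : ℝ → ℝ} {f' x : ℝ} (hx : (0:ℝ) ≤ x)
    (h : HasDerivWithinAt f f' (Set.Ici (0:ℝ)) x) :
    ∀ r, f' < r → ∃ᶠ z in nhdsWithin x (Set.Ioi x), (z - x)⁻¹ * (f z - f x) < r := by
  intro r hr
  have hslope : Tendsto (slope f x) (nhdsWithin x (Set.Ici 0 \ {x})) (nhds f') :=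
    hasDerivWithinAt_iff_tendsto_slope.mp h
  have hmono : nhdsWithin x (Set.Ioi x) ≤ nhdsWithin x (Set.Ici 0 \ {x}) :=
    nhdsWithin_mono x (fun z hz => ⟨hx.trans (le_of_lt hz), by simp [ne_of_gt (show x < z from hz)]⟩)
  have hev := (hslope.mono_left hmono).eventually_lt_const hr
  apply Filter.Eventually.frequently
  filter_upwards [hev] with z hz
  have : slope f x z = (z - x)⁻¹ * (f z - f x) := by
    rw [slope_def_field]; ring
  linarith [this ▸ hz]

lemma Mmat_apply {n : ℕ} (P : Matrix (Fin n) (Fin n) ℝ) (β b d : Fin n → ℝ) (i j : Fin n) :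
    Mmat P β b d i j = ∑ k, P i k * β k * (Ntil P b d k)⁻¹ * P j k := by
  rw [Mmat, Matrix.mul_apply]
  refine Finset.sum_congr rfl fun k _ => ?_
  rw [Matrix.mul_diagonal, Matrix.mul_diagonal, Matrix.transpose_apply]

lemma Mmat_nonneg {n : ℕ} {P : Matrix (Fin n) (Fin n) ℝ} {β b d : Fin n → ℝ}
    (hP0 : ∀ i j, 0 ≤ P i j) (hβ : ∀ j, 0 ≤ β j) (hb : ∀ i, 0 ≤ b i) (hd : ∀ i, 0 ≤ d i)
    (i j : Fin n) : 0 ≤ Mmat P β b d i j := by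
  rw [Mmat_apply]
  refine Finset.sum_nonneg fun k _ => ?_
  have hN : 0 ≤ Ntil P b d k :=
    Finset.sum_nonneg fun l _ => mul_nonneg (hP0 l k) (div_nonneg (hb l) (hd l))
  exact mul_nonneg (mul_nonneg (mul_nonneg (hP0 i k) (hβ k)) (inv_nonneg.mpr hN)) (hP0 j k)

lemma Fmat_apply {n : ℕ} (P : Matrix (Fin n) (Fin n) ℝ) (β b d : Fin n → ℝ) (i j : Fin n) :
    Fmat P β b d i j = Nbar b d i * Mmat P β b d i j := by
  rw [Fmat, Matrix.diagonal_mul]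

lemma spec_subeig {n : ℕ} (B : Matrix (Fin n) (Fin n) ℝ) (hB0 : ∀ i j, 0 ≤ B i j)
    (hs : 1 < specRad B) :
    ∃ (r : ℝ) (v : Fin n → ℝ), 1 < r ∧ (∀ i, 0 ≤ v i) ∧ (∃ i, 0 < v i) ∧
      ∀ i, r * v i ≤ ∑ j, B j i * v j := by
  set S := {r : ℝ | ∃ μ ∈ spectrum ℂ (B.map (Complex.ofReal)), ‖μ‖ = r} with hSdef
  have hSne : S.Nonempty := by
    by_contra h
    rw [Set.not_nonempty_iff_eq_empty] at h
    rw [specRad, ← hSdef, h, Real.sSup_empty] at hs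
    linarith
  obtain ⟨r, hrS, hr1⟩ := exists_lt_of_lt_csSup hSne hs
  obtain ⟨μ, hμ, hμr⟩ := hrS
  -- det of (μ•1 - B') is zero
  set B' := B.map (Complex.ofReal) with hB'
  have hnu : ¬IsUnit (algebraMap ℂ (Matrix (Fin n) (Fin n) ℂ) μ - B') := spectrum.mem_iff.mp hμ
  have hdet : (algebraMap ℂ (Matrix (Fin n) (Fin n) ℂ) μ - B').det = 0 := by
    by_contra h
    exact hnu ((Matrix.isUnit_iff_isUnit_det _).mpr (isUnit_iff_ne_zero.mpr h))
  have hdetT : (Matrix.diagonal (fun _ : Fin n => μ) - B'ᵀ).det = 0 := by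
    have : Matrix.diagonal (fun _ : Fin n => μ) - B'ᵀ
        = (algebraMap ℂ (Matrix (Fin n) (Fin n) ℂ) μ - B')ᵀ := by
      rw [Matrix.transpose_sub, Matrix.algebraMap_eq_diagonal, Matrix.diagonal_transpose]
      rfl
    rw [this, Matrix.det_transpose, hdet]
  obtain ⟨z, hz0, hz⟩ := (Matrix.exists_mulVec_eq_zero_iff).mpr hdetT
  have hzi : ∀ i, μ * z i = ∑ j, (Complex.ofReal (B j i)) * z j := by
    intro i
    have h1 := congrFun hz i
    have h2 : (Matrix.diagonal (fun _ : Fin n => μ)).mulVec z i - B'ᵀ.mulVec z i = 0 := by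
      rw [show ((Matrix.diagonal fun _ : Fin n => μ) *ᵥ z) i - (B'ᵀ *ᵥ z) i
          = (((Matrix.diagonal fun _ : Fin n => μ) - B'ᵀ) *ᵥ z) i from by
        rw [Matrix.sub_mulVec]; rfl, h1]; rfl
    rw [Matrix.mulVec_diagonal] at h2
    have h3 : B'ᵀ.mulVec z i = ∑ j, (Complex.ofReal (B j i)) * z j := by
      simp [Matrix.mulVec, dotProduct, Matrix.transpose_apply, hB', Matrix.map_apply]
    rw [h3] at h2
    linear_combination h2
  refine ⟨r, fun i => ‖z i‖, hr1, fun i => norm_nonneg _, ?_, ?_⟩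
  · obtain ⟨i, hi⟩ := Function.ne_iff.mp hz0
    exact ⟨i, norm_pos_iff.mpr hi⟩
  · intro i
    have h4 : r * ‖z i‖ = ‖μ * z i‖ := by rw [norm_mul, hμr]
    rw [h4, hzi i]
    calc ‖∑ j, (Complex.ofReal (B j i)) * z j‖ ≤ ∑ j, ‖(Complex.ofReal (B j i)) * z j‖ :=
          norm_sum_le _ _
      _ = ∑ j, B j i * ‖z j‖ := by
          refine Finset.sum_congr rfl fun j _ => ?_
          rw [norm_mul, Complex.norm_real, Real.norm_eq_abs, abs_of_nonneg (hB0 j i)]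

lemma Vmat_inv {n : ℕ} {d γ : Fin n → ℝ} (hd : ∀ i, 0 < d i) (hγ : ∀ i, 0 ≤ γ i) :
    (Vmat d γ)⁻¹ = -Matrix.diagonal (fun i => (d i + γ i)⁻¹) := by
  apply Matrix.inv_eq_right_inv
  rw [Vmat, Matrix.neg_mul, Matrix.mul_neg, neg_neg, Matrix.diagonal_mul_diagonal]
  have : (fun i => (d i + γ i) * (d i + γ i)⁻¹) = fun _ : Fin n => (1:ℝ) := by
    funext i
    exact mul_inv_cancel₀ (by have := hd i; have := hγ i; linarith)
  rw [this, Matrix.diagonal_one]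

lemma exists_subeigenvector {n : ℕ} {b d γ β : Fin n → ℝ}
    {P : Matrix (Fin n) (Fin n) ℝ}
    (hb : ∀ i, 0 < b i) (hd : ∀ i, 0 < d i) (hγ : ∀ i, 0 ≤ γ i) (hβ : ∀ j, 0 < β j)
    (hP0 : ∀ i j, 0 ≤ P i j)
    (hR0 : 1 < R0 P β b d γ) :
    ∃ (r : ℝ) (v : Fin n → ℝ), 1 < r ∧ (∀ i, 0 ≤ v i) ∧ (∃ i, 0 < v i) ∧
      ∀ i, r * ((d i + γ i) * v i) ≤ ∑ j, Fmat P β b d j i * v j := by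
  have hM0 : ∀ i j, 0 ≤ Mmat P β b d i j :=
    Mmat_nonneg hP0 (fun j => (hβ j).le) (fun i => (hb i).le) (fun i => (hd i).le)
  have hF0 : ∀ i j, 0 ≤ Fmat P β b d i j := by
    intro i j
    rw [Fmat_apply]
    exact mul_nonneg (div_nonneg (hb i).le (hd i).le) (hM0 i j)
  have hdγ : ∀ i, 0 < d i + γ i := fun i => by have := hd i; have := hγ i; linarith
  set B := -(Fmat P β b d * (Vmat d γ)⁻¹) with hBdef
  have hB : B = Fmat P β b d * Matrix.diagonal (fun i => (d i + γ i)⁻¹) := by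
    rw [hBdef, Vmat_inv hd hγ, Matrix.mul_neg, neg_neg]
  have hBij : ∀ i j, B i j = Fmat P β b d i j * (d j + γ j)⁻¹ := by
    intro i j; rw [hB, Matrix.mul_diagonal]
  have hB0 : ∀ i j, 0 ≤ B i j := fun i j => by
    rw [hBij]; exact mul_nonneg (hF0 i j) (inv_nonneg.mpr (hdγ j).le)
  obtain ⟨r, v, hr1, hv0, hvpos, hineq⟩ := spec_subeig B hB0 hR0
  refine ⟨r, v, hr1, hv0, hvpos, fun i => ?_⟩
  have h1 := hineq i
  have h2 : ∑ j, B j i * v j = (d i + γ i)⁻¹ * ∑ j, Fmat P β b d j i * v j := by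
    rw [Finset.mul_sum]
    refine Finset.sum_congr rfl fun j _ => ?_
    rw [hBij]; ring
  rw [h2] at h1
  have h3 := mul_le_mul_of_nonneg_left h1 (hdγ i).le
  calc r * ((d i + γ i) * v i) = (d i + γ i) * (r * v i) := by ring
    _ ≤ (d i + γ i) * ((d i + γ i)⁻¹ * ∑ j, Fmat P β b d j i * v j) := h3
    _ = ∑ j, Fmat P β b d j i * v j := by
        rw [← mul_assoc, mul_inv_cancel₀ (hdγ i).ne', one_mul]

set_option maxHeartbeats 1600000 in
theorem sis_dfe_unstable
    {n : ℕ} (hn : 1 ≤ n) (b d γ β : Fin n → ℝ) (P : Matrix (Fin n) (Fin n) ℝ)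
    (hb : ∀ i, 0 < b i) (hd : ∀ i, 0 < d i) (hγ : ∀ i, 0 ≤ γ i) (hβ : ∀ j, 0 < β j)
    (hP0 : ∀ i j, 0 ≤ P i j) (hP1 : ∀ i j, P i j ≤ 1)
    (hrow : ∀ i, ∑ j, P i j = 1) (hcol : ∀ j, ∃ k, 0 < P k j)
    (hirr : MatIrred P) (hR0 : 1 < R0 P β b d γ) :
    ∃ U ∈ nhds (0 : Fin n → ℝ), ∀ δ > (0 : ℝ), ∃ I0 ∈ OmegaSet b d,
      0 < ‖I0‖ ∧ ‖I0‖ < δ ∧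
      ∀ I : ℝ → Fin n → ℝ, IsSol P β b d γ I → I 0 = I0 →
        ∃ t ≥ (0 : ℝ), I t ∉ U := by
  haveI : Nonempty (Fin n) := ⟨⟨0, hn⟩⟩
  obtain ⟨r, v, hr1, hv0, ⟨i₀, hvi₀⟩, hveq⟩ := exists_subeigenvector hb hd hγ hβ hP0 hR0
  have hM0 : ∀ i j, 0 ≤ Mmat P β b d i j :=
    Mmat_nonneg hP0 (fun j => (hβ j).le) (fun i => (hb i).le) (fun i => (hd i).le)
  have hNbar0 : ∀ i, 0 < Nbar b d i := fun i => div_pos (hb i) (hd i)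
  have hdγ : ∀ i, 0 < d i + γ i := fun i => by have := hd i; have := hγ i; linarith
  set S : ℝ := ∑ i, ∑ j, Mmat P β b d i j with hSdef
  have hrowS : ∀ i, ∑ j, Mmat P β b d i j ≤ S := fun i =>
    Finset.single_le_sum (f := fun i => ∑ j, Mmat P β b d i j)
      (fun k _ => Finset.sum_nonneg fun j _ => hM0 k j) (Finset.mem_univ i)
  have hS0 : 0 ≤ S := Finset.sum_nonneg fun i _ => Finset.sum_nonneg fun j _ => hM0 i j
  set NB : ℝ := ∑ i, Nbar b d i with hNBdef
  have hNBle : ∀ i, Nbar b d i ≤ NB := fun i =>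
    Finset.single_le_sum (f := Nbar b d) (fun k _ => (hNbar0 k).le) (Finset.mem_univ i)
  have hNB0 : 0 ≤ NB := Finset.sum_nonneg fun i _ => (hNbar0 i).le
  set dm : ℝ := Finset.univ.inf' Finset.univ_nonempty (fun i => d i + γ i) with hdmdef
  have hdm0 : 0 < dm := (Finset.lt_inf'_iff _).mpr fun i _ => hdγ i
  have hdmle : ∀ i, dm ≤ d i + γ i := fun i => Finset.inf'_le _ (Finset.mem_univ i)
  set lam : ℝ := (r - 1) * dm with hlamdef
  have hlam0 : 0 < lam := mul_pos (by linarith) hdm0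
  set Nmin : ℝ := Finset.univ.inf' Finset.univ_nonempty (Nbar b d) with hNmindef
  have hNmin0 : 0 < Nmin := (Finset.lt_inf'_iff _).mpr fun i _ => hNbar0 i
  have hNminle : ∀ i, Nmin ≤ Nbar b d i := fun i => Finset.inf'_le _ (Finset.mem_univ i)
  set ε : ℝ := min 1 (min (lam / (2 * (S + 1))) Nmin) with hεdef
  have hε0 : 0 < ε := lt_min one_pos (lt_min (div_pos hlam0 (by linarith)) hNmin0)
  have hε1 : ε ≤ 1 := min_le_left _ _
  have hεN : ∀ i, ε ≤ Nbar b d i := fun i =>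
    le_trans (le_trans (min_le_right _ _) (min_le_right _ _)) (hNminle i)
  have hεS : ε * S ≤ lam / 2 := by
    have h1 : ε ≤ lam / (2 * (S + 1)) := le_trans (min_le_right _ _) (min_le_left _ _)
    calc ε * S ≤ (lam / (2 * (S + 1))) * S := mul_le_mul_of_nonneg_right h1 hS0
      _ ≤ lam / 2 := by
          rw [div_mul_eq_mul_div, div_le_div_iff₀ (by linarith) two_pos]
          nlinarith
  set K : ℝ := (NB + 1) * S with hKdef
  have hK0 : 0 ≤ K := mul_nonneg (by linarith) hS0
  set V1 : ℝ := ∑ i, v i with hV1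
  have hV1pos : 0 < V1 :=
    Finset.sum_pos' (fun i _ => hv0 i) ⟨i₀, Finset.mem_univ _, hvi₀⟩
  have hvleV1 : ∀ i, v i ≤ V1 := fun i =>
    Finset.single_le_sum (f := v) (fun k _ => hv0 k) (Finset.mem_univ i)
  set v2 : ℝ := ∑ i, v i * v i with hv2
  have hv2pos : 0 < v2 :=
    Finset.sum_pos' (fun i _ => mul_self_nonneg _) ⟨i₀, Finset.mem_univ _, mul_pos hvi₀ hvi₀⟩
  refine ⟨Metric.ball 0 ε, Metric.ball_mem_nhds _ hε0, ?_⟩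
  intro δ hδ
  set c : ℝ := min (δ / (2 * (V1 + 1))) (Nmin / (V1 + 1)) with hcdef
  have hc0 : 0 < c :=
    lt_min (div_pos hδ (by linarith)) (div_pos hNmin0 (by linarith))
  set I0 : Fin n → ℝ := fun i => c * v i with hI0def
  have hI0le : ∀ i, I0 i ≤ c * V1 := fun i => mul_le_mul_of_nonneg_left (hvleV1 i) hc0.le
  have hcV1δ : c * V1 < δ := by
    have h1 : c ≤ δ / (2 * (V1 + 1)) := min_le_left _ _
    have h2 : c * V1 ≤ (δ / (2 * (V1 + 1))) * V1 := mul_le_mul_of_nonneg_right h1 hV1pos.le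
    have h3 : (δ / (2 * (V1 + 1))) * V1 < δ := by
      rw [div_mul_eq_mul_div, div_lt_iff₀ (by linarith)]
      nlinarith
    linarith
  have hcV1N : c * V1 ≤ Nmin := by
    have h1 : c ≤ Nmin / (V1 + 1) := min_le_right _ _
    have h2 : c * V1 ≤ (Nmin / (V1 + 1)) * V1 := mul_le_mul_of_nonneg_right h1 hV1pos.le
    have h3 : (Nmin / (V1 + 1)) * V1 ≤ Nmin := by
      rw [div_mul_eq_mul_div, div_le_iff₀ (by linarith)]
      nlinarith
    linarith
  refine ⟨I0, fun i => ⟨mul_nonneg hc0.le (hv0 i), le_trans (hI0le i) (le_trans hcV1N (hNminle i))⟩,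
    ?_, ?_, ?_⟩
  · have hne : I0 ≠ 0 := by
      intro h
      have := congrFun h i₀
      simp only [hI0def, Pi.zero_apply] at this
      exact (ne_of_gt (mul_pos hc0 hvi₀)) this
    exact norm_pos_iff.mpr hne
  · refine lt_of_le_of_lt ?_ hcV1δ
    refine (pi_norm_le_iff_of_nonneg (mul_nonneg hc0.le hV1pos.le)).mpr fun i => ?_
    rw [Real.norm_eq_abs, abs_of_nonneg (mul_nonneg hc0.le (hv0 i))]
    exact hI0le i
  · intro I hI hI00
    by_contra hcon
    push_neg at hcon
    have hband : ∀ t, 0 ≤ t → ∀ i, |I t i| < ε := by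
      intro t ht i
      have h1 := hcon t ht
      rw [Metric.mem_ball, dist_zero_right] at h1
      calc |I t i| = ‖I t i‖ := (Real.norm_eq_abs _).symm
        _ ≤ ‖I t‖ := norm_le_pi_norm (I t) i
        _ < ε := h1
    have hIc : ∀ (i : Fin n), ∀ t, 0 ≤ t →
        HasDerivWithinAt (fun s => I s i) (Gfield P β b d γ (I t) i) (Set.Ici 0) t :=
      fun i t ht => hasDerivWithinAt_pi.mp (hI t ht) i
    have hIcont : ∀ i : Fin n, ContinuousOn (fun s => I s i) (Set.Ici 0) :=
      fun i t ht => (hIc i t ht).continuousWithinAt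
    have hGf : ∀ (w : Fin n → ℝ) i, Gfield P β b d γ w i
        = (Nbar b d i - w i) * (∑ j, Mmat P β b d i j * w j) - (d i + γ i) * w i := by
      intro w i
      simp only [Gfield, Matrix.mulVec, dotProduct]
    -- INVARIANCE
    have hinv : ∀ T, 0 ≤ T → ∀ j, 0 ≤ I T j := by
      intro T hT j
      set f : ℝ → ℝ := fun t => Finset.univ.sup' Finset.univ_nonempty
        (fun i => max (-(I t i)) 0) with hfdef
      have hbr : ∀ t i, max (-(I t i)) 0 ≤ f t := fun t i => by
        simp only [hfdef]
        exact Finset.le_sup' (fun i => max (-(I t i)) 0) (Finset.mem_univ i)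
      have hfnn : ∀ t, 0 ≤ f t := fun t => le_trans (le_max_right _ _) (hbr t i₀)
      have hbr' : ∀ t i, -(I t i) ≤ f t := fun t i => le_trans (le_max_left _ _) (hbr t i)
      have hf0 : f 0 ≤ 0 := by
        apply Finset.sup'_le
        intro i _
        have h1 : I 0 i = I0 i := congrFun hI00 i
        have h2 : 0 ≤ I0 i := mul_nonneg hc0.le (hv0 i)
        rw [max_le_iff]
        constructor
        · rw [h1]; linarith
        · rfl
      have key : ∀ x ∈ Set.Ico (0:ℝ) T, ∀ rr, K * f x < rr →
          ∃ᶠ z in nhdsWithin x (Set.Ioi x), (z - x)⁻¹ * (f z - f x) < rr := by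
        intro x hx rr hrr
        have hx0 : 0 ≤ x := hx.1
        have hrr0 : 0 < rr := lt_of_le_of_lt (mul_nonneg hK0 (hfnn x)) hrr
        have hnhds : nhdsWithin x (Set.Ioi x) ≤ nhdsWithin x (Set.Ici 0) :=
          nhdsWithin_mono x (fun z hz => hx0.trans (le_of_lt hz))
        have hev : ∀ i : Fin n, ∀ᶠ z in nhdsWithin x (Set.Ioi x),
            (z - x)⁻¹ * (max (-(I z i)) 0 - f x) < rr := by
          intro i
          have hcont_i : Filter.Tendsto (fun z => -(I z i)) (nhdsWithin x (Set.Ioi x))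
              (nhds (-(I x i))) :=
            (((hIcont i x hx0).neg).tendsto).mono_left hnhds
          rcases lt_or_eq_of_le (hbr' x i) with hinact | hact
          · rcases eq_or_lt_of_le (hfnn x) with hfx | hfx
            · have hIxi : -(I x i) < 0 := by rw [← hfx] at hinact; exact hinact
              have hev3 := hcont_i.eventually_lt_const hIxi
              filter_upwards [hev3] with z hz1
              rw [max_eq_right hz1.le, ← hfx]
              simpa using hrr0
            · have hev2 := hcont_i.eventually_lt_const hinact
              filter_upwards [hev2, self_mem_nhdsWithin] with z hz1 hz2
              have hmax : max (-(I z i)) 0 - f x < 0 := by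
                have := max_lt hz1 hfx; linarith
              have hzx : 0 < z - x := sub_pos.mpr hz2
              have := mul_neg_of_pos_of_neg (inv_pos.mpr hzx) hmax
              linarith
          · -- active: -(I x i) = f x
            have hGi : K * (-(f x)) ≤ Gfield P β b d γ (I x) i := by
              have hm0 : -(f x) ≤ 0 := neg_nonpos.mpr (hfnn x)
              have hallm : ∀ l, -(f x) ≤ I x l := fun l => by have := hbr' x l; linarith
              have habs : ∀ l, |I x l| < ε := hband x hx0
              have h1 : S * (-(f x)) ≤ ∑ jj, Mmat P β b d i jj * I x jj := by
                calc S * (-(f x)) ≤ (∑ jj, Mmat P β b d i jj) * (-(f x)) :=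
                      mul_le_mul_of_nonpos_right (hrowS i) hm0
                  _ = ∑ jj, Mmat P β b d i jj * (-(f x)) := by rw [Finset.sum_mul]
                  _ ≤ ∑ jj, Mmat P β b d i jj * I x jj :=
                      Finset.sum_le_sum fun jj _ =>
                        mul_le_mul_of_nonneg_left (hallm jj) (hM0 i jj)
              have h2a : 0 ≤ Nbar b d i - I x i := by
                have := (abs_lt.mp (habs i)).2; have := hεN i; linarith
              have h2b : Nbar b d i - I x i ≤ NB + 1 := by
                have := (abs_lt.mp (habs i)).1; have := hNBle i; linarith
              have h3 : (NB + 1) * (S * (-(f x)))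
                  ≤ (Nbar b d i - I x i) * (∑ jj, Mmat P β b d i jj * I x jj) :=
                aux_mul_lb h2a h2b h1 (mul_nonpos_of_nonneg_of_nonpos hS0 hm0)
              have hIxi : I x i = -(f x) := by linarith [hact]
              have h4 : 0 ≤ -((d i + γ i) * I x i) := by
                rw [hIxi]
                have := hdγ i
                nlinarith [hfnn x]
              rw [hGf]
              have hKm : K * (-(f x)) = (NB + 1) * (S * (-(f x))) := by
                rw [hKdef]; ring
              linarith
            have hslope : Filter.Tendsto (fun z => (z - x)⁻¹ * (I z i - I x i))
                (nhdsWithin x (Set.Ioi x)) (nhds (Gfield P β b d γ (I x) i)) := by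
              have h5 := hasDerivWithinAt_iff_tendsto_slope.mp (hIc i x hx0)
              have hmono : nhdsWithin x (Set.Ioi x) ≤ nhdsWithin x (Set.Ici 0 \ {x}) :=
                nhdsWithin_mono x (fun z hz => ⟨hx0.trans (le_of_lt hz), by simp [ne_of_gt (show x < z from hz)]⟩)
              refine (h5.mono_left hmono).congr fun z => ?_
              rw [slope_def_field]; ring
            have hneg : Filter.Tendsto (fun z => (z - x)⁻¹ * (-(I z i) + I x i))
                (nhdsWithin x (Set.Ioi x)) (nhds (-(Gfield P β b d γ (I x) i))) := by
              refine hslope.neg.congr fun z => ?_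
              ring
            have hlt : -(Gfield P β b d γ (I x) i) < rr := by
              have h6 : -(Gfield P β b d γ (I x) i) ≤ K * f x := by linarith [hGi]
              linarith
            have hev4 := hneg.eventually_lt_const hlt
            filter_upwards [hev4, self_mem_nhdsWithin] with z hz1 hz2
            have hzx : 0 < z - x := sub_pos.mpr hz2
            rcases le_or_gt (-(I z i)) 0 with h0 | h0
            · rw [max_eq_right h0]
              have h7 : (z - x)⁻¹ * (0 - f x) ≤ 0 :=
                mul_nonpos_of_nonneg_of_nonpos (inv_pos.mpr hzx).le (by linarith [hfnn x])
              linarith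
            · rw [max_eq_left h0.le]
              have heq : -(I z i) - f x = -(I z i) + I x i := by rw [← hact]; ring
              rw [heq]; exact hz1
        have hall := Filter.eventually_all.mpr hev
        apply Filter.Eventually.frequently
        filter_upwards [hall] with z hz
        obtain ⟨i, -, hfz⟩ :=
          Finset.exists_mem_eq_sup' (Finset.univ_nonempty (α := Fin n))
            (fun i => max (-(I z i)) 0)
        have hfzeq : f z = max (-(I z i)) 0 := hfz
        rw [hfzeq]
        exact hz i
      have hcontf : ContinuousOn f (Set.Icc 0 T) := by
        apply ContinuousOn.finset_sup'_apply
        intro i _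
        exact (((hIcont i).mono Set.Icc_subset_Ici_self).neg).sup continuousOn_const
      have hgb := le_gronwallBound_of_liminf_deriv_right_le (f := f)
        (f' := fun x => K * f x) (δ := 0) (K := K) (ε := 0) (a := 0) (b := T)
        hcontf key hf0 (fun x _ => by simp)
      have hfT := hgb T (Set.right_mem_Icc.mpr hT)
      rw [sub_zero, gronwallBound_ε0_δ0] at hfT
      have := hbr' T j
      linarith
    -- GROWTH
    set L : ℝ → ℝ := fun t => ∑ i, v i * I t i with hLdef
    have hLder : ∀ t, 0 ≤ t →
        HasDerivWithinAt L (∑ i, v i * Gfield P β b d γ (I t) i) (Set.Ici 0) t := by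
      intro t ht
      exact HasDerivWithinAt.fun_sum fun i _ => (hIc i t ht).const_mul (v i)
    have hgrow : ∀ x, 0 ≤ x → lam / 2 * L x ≤ ∑ i, v i * Gfield P β b d γ (I x) i := by
      intro x hx
      have hpos : ∀ j, 0 ≤ I x j := hinv x hx
      have hlt : ∀ j, I x j ≤ ε := fun j =>
        le_of_lt (lt_of_le_of_lt (le_abs_self _) (hband x hx j))
      have hMI : ∀ i, ∑ j, Mmat P β b d i j * I x j ≤ lam / 2 := by
        intro i
        calc ∑ j, Mmat P β b d i j * I x j ≤ ∑ j, Mmat P β b d i j * ε :=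
              Finset.sum_le_sum fun j _ => mul_le_mul_of_nonneg_left (hlt j) (hM0 i j)
          _ = (∑ j, Mmat P β b d i j) * ε := by rw [Finset.sum_mul]
          _ ≤ S * ε := mul_le_mul_of_nonneg_right (hrowS i) hε0.le
          _ = ε * S := mul_comm _ _
          _ ≤ lam / 2 := hεS
      have hid : ∑ i, v i * Gfield P β b d γ (I x) i
          = (∑ i, (v i * Nbar b d i) * (∑ j, Mmat P β b d i j * I x j))
            - (∑ i, (v i * I x i) * (∑ j, Mmat P β b d i j * I x j))
            - (∑ i, v i * ((d i + γ i) * I x i)) := by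
        rw [← Finset.sum_sub_distrib, ← Finset.sum_sub_distrib]
        refine Finset.sum_congr rfl fun i _ => ?_
        rw [hGf]; ring
      have hT1 : ∑ j, (r * ((d j + γ j) * v j)) * I x j
          ≤ ∑ i, (v i * Nbar b d i) * (∑ j, Mmat P β b d i j * I x j) := by
        have hswap : ∑ i, (v i * Nbar b d i) * (∑ j, Mmat P β b d i j * I x j)
            = ∑ j, (∑ i, Fmat P β b d i j * v i) * I x j := by
          calc ∑ i, (v i * Nbar b d i) * (∑ j, Mmat P β b d i j * I x j)
              = ∑ i, ∑ j, (Fmat P β b d i j * v i) * I x j := by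
                refine Finset.sum_congr rfl fun i _ => ?_
                rw [Finset.mul_sum]
                refine Finset.sum_congr rfl fun j _ => ?_
                rw [Fmat_apply]; ring
            _ = ∑ j, ∑ i, (Fmat P β b d i j * v i) * I x j := Finset.sum_comm
            _ = ∑ j, (∑ i, Fmat P β b d i j * v i) * I x j := by
                refine Finset.sum_congr rfl fun j _ => ?_
                rw [Finset.sum_mul]
        rw [hswap]
        exact Finset.sum_le_sum fun j _ => mul_le_mul_of_nonneg_right (hveq j) (hpos j)
      have hT3 : ∑ i, (v i * I x i) * (∑ j, Mmat P β b d i j * I x j)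
          ≤ ∑ i, (v i * I x i) * (lam / 2) :=
        Finset.sum_le_sum fun i _ =>
          mul_le_mul_of_nonneg_left (hMI i) (mul_nonneg (hv0 i) (hpos i))
      have hperj : ∀ j, lam / 2 * (v j * I x j) + (v j * I x j) * (lam / 2)
          + v j * ((d j + γ j) * I x j) ≤ (r * ((d j + γ j) * v j)) * I x j := by
        intro j
        have h1 : dm ≤ d j + γ j := hdmle j
        have h2 : 0 ≤ v j * I x j := mul_nonneg (hv0 j) (hpos j)
        have h3 : (r - 1) * dm * (v j * I x j) ≤ (r - 1) * (d j + γ j) * (v j * I x j) := by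
          apply mul_le_mul_of_nonneg_right _ h2
          exact mul_le_mul_of_nonneg_left h1 (by linarith)
        have hlameq : lam = (r - 1) * dm := hlamdef
        have h4 : lam * (v j * I x j) ≤ (r - 1) * (d j + γ j) * (v j * I x j) := by
          rw [hlameq]; exact h3
        nlinarith [h4]
      have hsum := Finset.sum_le_sum fun j (_ : j ∈ Finset.univ) => hperj j
      have e1 : ∑ j, (lam / 2 * (v j * I x j) + (v j * I x j) * (lam / 2)
            + v j * ((d j + γ j) * I x j))
          = lam / 2 * L x + (∑ i, (v i * I x i) * (lam / 2))
            + ∑ i, v i * ((d i + γ i) * I x i) := by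
        rw [Finset.sum_add_distrib, Finset.sum_add_distrib, ← Finset.mul_sum]
      rw [hid]
      rw [e1] at hsum
      linarith
    set L0 : ℝ := c * v2 with hL0def
    have hL0pos : 0 < L0 := mul_pos hc0 hv2pos
    have hLzero : L 0 = L0 := by
      have : ∀ i, v i * I 0 i = c * (v i * v i) := by
        intro i
        rw [congrFun hI00 i]
        show v i * (c * v i) = c * (v i * v i)
        ring
      calc L 0 = ∑ i, v i * I 0 i := rfl
        _ = ∑ i, c * (v i * v i) := Finset.sum_congr rfl fun i _ => this i
        _ = c * ∑ i, v i * v i := by rw [Finset.mul_sum]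
        _ = L0 := rfl
    set T : ℝ := (ε * V1 + 1) / (L0 * (lam / 2)) with hTdef
    have hT0 : 0 ≤ T := by
      apply le_of_lt
      apply div_pos (by positivity) (by positivity)
    have hgb2 := le_gronwallBound_of_liminf_deriv_right_le (f := fun t => -(L t))
      (f' := fun t => -(∑ i, v i * Gfield P β b d γ (I t) i))
      (δ := -L0) (K := lam / 2) (ε := 0) (a := 0) (b := T)
      (fun t ht => (((hLder t ht.1).continuousWithinAt).neg).mono Set.Icc_subset_Ici_self)
      (fun x hx rr hrr => frequently_slope_lt hx.1 ((hLder x hx.1).neg) rr hrr)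
      (by show -(L 0) ≤ -L0; rw [hLzero])
      (fun x hx => by
        show -(∑ i, v i * Gfield P β b d γ (I x) i) ≤ lam / 2 * (-(L x)) + 0
        have := hgrow x hx.1; linarith)
    have hgT := hgb2 T (Set.right_mem_Icc.mpr hT0)
    rw [sub_zero, gronwallBound_ε0] at hgT
    have hLT : L0 * Real.exp (lam / 2 * T) ≤ L T := by
      have h8 : -(L T) ≤ -L0 * Real.exp (lam / 2 * T) := hgT
      linarith
    have hLbd : L T ≤ V1 * ε := by
      calc L T = ∑ i, v i * I T i := rfl
        _ ≤ ∑ i, v i * ε := Finset.sum_le_sum fun i _ =>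
            mul_le_mul_of_nonneg_left
              (le_of_lt (lt_of_le_of_lt (le_abs_self _) (hband T hT0 i))) (hv0 i)
        _ = V1 * ε := by rw [← Finset.sum_mul]
    have hexp : lam / 2 * T + 1 ≤ Real.exp (lam / 2 * T) := Real.add_one_le_exp _
    have hTeq : L0 * (lam / 2 * T) = ε * V1 + 1 := by
      rw [hTdef]
      field_simp
    have h9 : L0 * (lam / 2 * T + 1) = ε * V1 + 1 + L0 := by
      rw [mul_add, hTeq, mul_one]
    linarith [mul_le_mul_of_nonneg_left hexp hL0pos.le, hLT, hLbd, h9, hL0pos]
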